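/- If σ > 2, then every discrete community c ∈ {0,1}ⁿ (with positive volume and with positive volume of its complement region, so the function is defined in a neighborhood) is a local minimum of the σ-conductance φ_σ restricted to the box [0,1]ⁿ. -/

import Mathlib

open Finset

/-- degree / weight of node `i`. -/
noncomputable def w {n : ℕ} (A : Matrix (Fin n) (Fin n) ℝ) (i : Fin n) : ℝ := ∑ j, A i j

/-- σ-conductance as a function of a real membership vector. -/
noncomputable def phiSigma {n : ℕ} (A : Matrix (Fin n) (Fin n) ℝ) (σ : ℝ) (c : Fin n → ℝ) : ℝ :=
  1 - (∑ i, ∑ j, c i * A i j * c j) / (∑ i, c i * w A i)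
    - σ * (∑ i, (c i) ^ 2 * w A i) / (∑ i, c i * w A i)

set_option maxHeartbeats 1000000 in
/-- for σ > 2, every discrete community (with positive volume and
positive complement volume) is a local minimum of σ-conductance on the box [0,1]ⁿ. -/
theorem stmt_5 {n : ℕ} (A : Matrix (Fin n) (Fin n) ℝ)
    (hsym : ∀ i j, A i j = A j i) (hnonneg : ∀ i j, 0 ≤ A i j)
    (hw : ∀ i, 0 < w A i)
    (σ : ℝ) (hσ : 2 < σ) (c : Fin n → ℝ) (hdisc : ∀ i, c i = 0 ∨ c i = 1)
    (hvol : 0 < ∑ i, c i * w A i) (hcovol : 0 < ∑ i, (1 - c i) * w A i) :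
    ∃ ε > 0, ∀ c' : Fin n → ℝ, (∀ i, 0 ≤ c' i ∧ c' i ≤ 1) → ‖c' - c‖ < ε →
      phiSigma A σ c ≤ phiSigma A σ c' := by
  classical
  have hwnn : ∀ i, (0:ℝ) ≤ w A i := fun i => (hw i).le
  have hc01 : ∀ i, 0 ≤ c i ∧ c i ≤ 1 := by
    intro i; rcases hdisc i with h | h <;> simp [h]
  have hcsq : ∀ i, c i ^ 2 = c i := by
    intro i; rcases hdisc i with h | h <;> simp [h]
  set V := ∑ i, c i * w A i with hVdef
  set Q := ∑ i, ∑ j, c i * A i j * c j with hQdef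
  have hVne : V ≠ 0 := ne_of_gt hvol
  have hB : ∀ i, (0:ℝ) ≤ ∑ j, A i j * c j ∧ (∑ j, A i j * c j) ≤ w A i := by
    intro i
    constructor
    · exact Finset.sum_nonneg fun j _ => mul_nonneg (hnonneg i j) (hc01 j).1
    · simp only [w]
      refine Finset.sum_le_sum fun j _ => ?_
      nlinarith [(hc01 j).2, hnonneg i j, (hc01 j).1]
  have hQrw : Q = ∑ i, c i * ∑ j, A i j * c j := by
    rw [hQdef]
    refine Finset.sum_congr rfl fun i _ => ?_
    rw [Finset.mul_sum]
    exact Finset.sum_congr rfl fun j _ => by ring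
  have hQnn : 0 ≤ Q := by
    rw [hQrw]
    exact Finset.sum_nonneg fun i _ => mul_nonneg (hc01 i).1 (hB i).1
  have hQleV : Q ≤ V := by
    rw [hQrw, hVdef]
    exact Finset.sum_le_sum fun i _ => mul_le_mul_of_nonneg_left (hB i).2 (hc01 i).1
  set lam := Q / V with hlamdef
  have hlamV : lam * V = Q := div_mul_cancel₀ Q hVne
  have hlam0 : 0 ≤ lam := div_nonneg hQnn hvol.le
  have hlam1 : lam ≤ 1 := (div_le_one hvol).mpr hQleV
  have hSc : ∑ i, (c i) ^ 2 * w A i = V := by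
    rw [hVdef]; exact Finset.sum_congr rfl fun i _ => by rw [hcsq i]
  have hWpos : 0 < ∑ i, w A i := by
    have h1 : V ≤ ∑ i, w A i := by
      rw [hVdef]
      refine Finset.sum_le_sum fun i _ => ?_
      nlinarith [(hc01 i).2, (hc01 i).1, hw i]
    linarith
  have hWne : (∑ i, w A i) ≠ 0 := ne_of_gt hWpos
  set ε₁ : ℝ := (σ - 2) / (σ + 1) with hε₁
  set ε₂ : ℝ := V / (2 * ∑ i, w A i) with hε₂
  have hσ1 : σ + 1 ≠ 0 := by positivity
  have hε₁pos : 0 < ε₁ := by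
    rw [hε₁]; exact div_pos (by linarith) (by linarith)
  have hε₂pos : 0 < ε₂ := by rw [hε₂]; positivity
  have hprod : ε₁ * (σ + 1) = σ - 2 := by
    rw [hε₁, div_mul_cancel₀ _ hσ1]
  refine ⟨min ε₁ ε₂, lt_min hε₁pos hε₂pos, ?_⟩
  intro c' hbox hnorm
  have habs : ∀ i, |c' i - c i| ≤ min ε₁ ε₂ := by
    intro i
    have h1 := norm_le_pi_norm (c' - c) i
    rw [Pi.sub_apply, Real.norm_eq_abs] at h1
    linarith
  have habs1 : ∀ i, |c' i - c i| ≤ ε₁ := fun i => (habs i).trans (min_le_left _ _)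
  have habs2 : ∀ i, |c' i - c i| ≤ ε₂ := fun i => (habs i).trans (min_le_right _ _)
  have hMnn : 0 ≤ ∑ i, |c' i - c i| * w A i :=
    Finset.sum_nonneg fun i _ => mul_nonneg (abs_nonneg _) (hwnn i)
  have hMle : ∑ i, |c' i - c i| * w A i ≤ V / 2 := by
    have h1 : ∑ i, |c' i - c i| * w A i ≤ ∑ i, ε₂ * w A i :=
      Finset.sum_le_sum fun i _ => mul_le_mul_of_nonneg_right (habs2 i) (hwnn i)
    have h2 : ∑ i, ε₂ * w A i = V / 2 := by
      rw [← Finset.mul_sum, hε₂]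
      field_simp
    linarith
  have hV'pos : 0 < ∑ i, c' i * w A i := by
    have h1 : ∑ i, (c i * w A i - |c' i - c i| * w A i) ≤ ∑ i, c' i * w A i := by
      refine Finset.sum_le_sum fun i _ => ?_
      have h2 : (c i - |c' i - c i|) * w A i ≤ c' i * w A i :=
        mul_le_mul_of_nonneg_right (by linarith [neg_abs_le (c' i - c i)]) (hwnn i)
      linarith [h2]
    rw [Finset.sum_sub_distrib, ← hVdef] at h1
    linarith
  -- symmetry swap
  have hswap : ∑ i, ∑ j, c i * A i j * (c' j - c j)
      = ∑ i, (c' i - c i) * ∑ j, A i j * c j := by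
    rw [Finset.sum_comm]
    refine Finset.sum_congr rfl fun i _ => ?_
    rw [Finset.mul_sum]
    refine Finset.sum_congr rfl fun j _ => ?_
    rw [hsym j i]
    ring
  have e1 : ∑ i, ∑ j, (c' i - c i) * A i j * c j
      = ∑ i, (c' i - c i) * ∑ j, A i j * c j := by
    refine Finset.sum_congr rfl fun i _ => ?_
    rw [Finset.mul_sum]
    exact Finset.sum_congr rfl fun j _ => by ring
  have hQ' : ∑ i, ∑ j, c' i * A i j * c' j
      = Q + 2 * (∑ i, (c' i - c i) * ∑ j, A i j * c j)
        + ∑ i, ∑ j, (c' i - c i) * A i j * (c' j - c j) := by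
    have e0 : ∑ i, ∑ j, c' i * A i j * c' j
        = ∑ i, ((∑ j, c i * A i j * c j) + (∑ j, (c' i - c i) * A i j * c j)
            + (∑ j, c i * A i j * (c' j - c j))
            + (∑ j, (c' i - c i) * A i j * (c' j - c j))) := by
      refine Finset.sum_congr rfl fun i _ => ?_
      rw [← Finset.sum_add_distrib, ← Finset.sum_add_distrib, ← Finset.sum_add_distrib]
      exact Finset.sum_congr rfl fun j _ => by ring
    rw [e0, Finset.sum_add_distrib, Finset.sum_add_distrib, Finset.sum_add_distrib,
      hswap, e1, ← hQdef]
    ring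
  have hS' : ∑ i, (c' i) ^ 2 * w A i
      = V + 2 * (∑ i, c i * (c' i - c i) * w A i) + ∑ i, (c' i - c i) ^ 2 * w A i := by
    rw [← hSc, Finset.mul_sum, ← Finset.sum_add_distrib, ← Finset.sum_add_distrib]
    exact Finset.sum_congr rfl fun i _ => by ring
  have hV'eq : ∑ i, c' i * w A i = V + ∑ i, (c' i - c i) * w A i := by
    rw [hVdef, ← Finset.sum_add_distrib]
    exact Finset.sum_congr rfl fun i _ => by ring
  have hLsplit : ∑ i, (c' i - c i) * (2 * (∑ j, A i j * c j) + 2 * σ * c i * w A i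
        - (lam + σ) * w A i)
      = 2 * (∑ i, (c' i - c i) * ∑ j, A i j * c j)
        + 2 * σ * (∑ i, c i * (c' i - c i) * w A i)
        - (lam + σ) * (∑ i, (c' i - c i) * w A i) := by
    rw [Finset.mul_sum, Finset.mul_sum, Finset.mul_sum, ← Finset.sum_add_distrib,
      ← Finset.sum_sub_distrib]
    exact Finset.sum_congr rfl fun i _ => by ring
  have hL : ∑ i, (c' i - c i) * (2 * (∑ j, A i j * c j) + 2 * σ * c i * w A i
        - (lam + σ) * w A i)
      ≤ -(σ - 2) * ∑ i, |c' i - c i| * w A i := by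
    rw [Finset.mul_sum]
    refine Finset.sum_le_sum fun i _ => ?_
    rcases hdisc i with hc0 | hc1
    · rw [hc0, sub_zero, abs_of_nonneg (hbox i).1]
      nlinarith [mul_le_mul_of_nonneg_left (hB i).2 (hbox i).1,
        mul_nonneg (mul_nonneg hlam0 (hbox i).1) (hwnn i)]
    · rw [hc1, abs_of_nonpos (by linarith [(hbox i).2] : c' i - 1 ≤ 0)]
      have ht : (0:ℝ) ≤ 1 - c' i := by linarith [(hbox i).2]
      nlinarith [mul_nonneg ht (hB i).1, mul_nonneg ht (hwnn i),
        mul_nonneg (mul_nonneg ht (by linarith : (0:ℝ) ≤ 1 - lam)) (hwnn i)]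
  have hD : ∑ i, ∑ j, (c' i - c i) * A i j * (c' j - c j)
      ≤ ε₁ * ∑ i, |c' i - c i| * w A i := by
    rw [Finset.mul_sum]
    refine Finset.sum_le_sum fun i _ => ?_
    have e2 : ε₁ * (|c' i - c i| * w A i) = ∑ j, |c' i - c i| * A i j * ε₁ := by
      simp only [w, Finset.mul_sum]
      exact Finset.sum_congr rfl fun j _ => by ring
    rw [e2]
    refine Finset.sum_le_sum fun j _ => ?_
    have h1 := le_abs_self ((c' i - c i) * A i j * (c' j - c j))
    rw [abs_mul, abs_mul, abs_of_nonneg (hnonneg i j)] at h1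
    have h2 : |c' i - c i| * A i j * |c' j - c j| ≤ |c' i - c i| * A i j * ε₁ :=
      mul_le_mul_of_nonneg_left (habs1 j) (mul_nonneg (abs_nonneg _) (hnonneg i j))
    linarith
  have hE : ∑ i, (c' i - c i) ^ 2 * w A i ≤ ε₁ * ∑ i, |c' i - c i| * w A i := by
    rw [Finset.mul_sum]
    refine Finset.sum_le_sum fun i _ => ?_
    rw [← sq_abs (c' i - c i)]
    have k1 : |c' i - c i| * |c' i - c i| ≤ ε₁ * |c' i - c i| :=
      mul_le_mul_of_nonneg_right (habs1 i) (abs_nonneg _)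
    have k2 : |c' i - c i| * |c' i - c i| * w A i ≤ ε₁ * |c' i - c i| * w A i :=
      mul_le_mul_of_nonneg_right k1 (hwnn i)
    nlinarith [k2]
  have hσnn : (0:ℝ) ≤ σ := by linarith
  have hEσ := mul_le_mul_of_nonneg_left hE hσnn
  have hprodM : ε₁ * (σ + 1) * (∑ i, |c' i - c i| * w A i)
      = (σ - 2) * (∑ i, |c' i - c i| * w A i) := by rw [hprod]
  have keyineq : (∑ i, ∑ j, c' i * A i j * c' j) + σ * (∑ i, (c' i) ^ 2 * w A i)
      ≤ (lam + σ) * (∑ i, c' i * w A i) := by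
    rw [hQ', hS', hV'eq]
    linarith [hL, hD, hLsplit, hlamV, hMnn, hEσ, hprodM]
  have hrhs : (∑ i, ∑ j, c' i * A i j * c' j) / (∑ i, c' i * w A i)
      + σ * (∑ i, (c' i) ^ 2 * w A i) / (∑ i, c' i * w A i) ≤ lam + σ := by
    rw [← add_div, div_le_iff₀ hV'pos]
    linarith [keyineq]
  show phiSigma A σ c ≤ phiSigma A σ c'
  unfold phiSigma
  rw [hSc, ← hQdef, ← hVdef]
  have hσV : σ * V / V = σ := by rw [mul_div_assoc, div_self hVne, mul_one]
  have hQVlam : Q / V = lam := hlamdef.symm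
  rw [hσV, hQVlam]
  linarith [hrhs]
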